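/- The four rational functions R₀ = y₁y₂/(x₁x₂(y₁y₂x₃ − x₁y₂y₃ − y₁x₂z₃)), R₁ = y₁/(x₁x₂(y₁x₃ − x₁y₃)), R₂ = y₂/(x₁x₂(y₂x₃ − x₂z₃)), R₃ = 1/(x₁x₂x₃) are linearly independent over ℂ (as rational functions in the seven variables x₁,x₂,x₃,y₁,y₂,y₃,z₃). -/

import Mathlib

noncomputable abbrev K : Type := FractionRing (MvPolynomial (Fin 7) ℂ)

/-- Variables, ordered x₁, x₂, x₃, y₁, y₂, y₃, z₃. -/
noncomputable def X (i : Fin 7) : K :=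
  algebraMap (MvPolynomial (Fin 7) ℂ) K (MvPolynomial.X i)

set_option synthInstance.maxHeartbeats 1000000 in
set_option maxHeartbeats 4000000 in
open MvPolynomial in
/-- The four residue rational functions R₀, R₁, R₂, R₃ are linearly independent
over ℂ in the field of rational functions in seven variables. -/
theorem stmt19 :
    LinearIndependent ℂ
      ![(X 3 * X 4) / (X 0 * X 1 * (X 3 * X 4 * X 2 - X 0 * X 4 * X 5 - X 3 * X 1 * X 6)),
        X 3 / (X 0 * X 1 * (X 3 * X 2 - X 0 * X 5)),
        X 4 / (X 0 * X 1 * (X 4 * X 2 - X 1 * X 6)),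
        1 / (X 0 * X 1 * X 2)] := by
  classical
  rw [Fintype.linearIndependent_iff]
  intro g hg
  let f := algebraMap (MvPolynomial (Fin 7) ℂ) K
  have hinj : Function.Injective f := IsFractionRing.injective _ _
  have hC : ∀ c : ℂ, (algebraMap ℂ K c) = f (C c) := fun c => by
    rw [IsScalarTower.algebraMap_apply ℂ (MvPolynomial (Fin 7) ℂ) K, MvPolynomial.algebraMap_eq]
  have hX : ∀ i, X i = f (MvPolynomial.X i) := fun i => rfl
  have hnz : ∀ p : MvPolynomial (Fin 7) ℂ, (∃ σ : Fin 7 → ℂ, eval σ p ≠ 0) → f p ≠ 0 := by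
    intro p ⟨σ, hσ⟩
    rw [map_ne_zero_iff f hinj]
    intro h; exact hσ (by rw [h]; simp)
  have h0 : f (MvPolynomial.X 0 : MvPolynomial (Fin 7) ℂ) ≠ 0 :=
    hnz _ ⟨1, by simp⟩
  have h1 : f (MvPolynomial.X 1 : MvPolynomial (Fin 7) ℂ) ≠ 0 :=
    hnz _ ⟨1, by simp⟩
  have h2 : f (MvPolynomial.X 2 : MvPolynomial (Fin 7) ℂ) ≠ 0 :=
    hnz _ ⟨1, by simp⟩
  have hd0 : f (MvPolynomial.X 3 * MvPolynomial.X 4 * MvPolynomial.X 2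
      - MvPolynomial.X 0 * MvPolynomial.X 4 * MvPolynomial.X 5
      - MvPolynomial.X 3 * MvPolynomial.X 1 * MvPolynomial.X 6 : MvPolynomial (Fin 7) ℂ) ≠ 0 :=
    hnz _ ⟨![0, 0, 1, 1, 1, 0, 0], by simp⟩
  have hd1 : f (MvPolynomial.X 3 * MvPolynomial.X 2
      - MvPolynomial.X 0 * MvPolynomial.X 5 : MvPolynomial (Fin 7) ℂ) ≠ 0 :=
    hnz _ ⟨![0, 0, 1, 1, 0, 0, 0], by simp⟩
  have hd2 : f (MvPolynomial.X 4 * MvPolynomial.X 2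
      - MvPolynomial.X 1 * MvPolynomial.X 6 : MvPolynomial (Fin 7) ℂ) ≠ 0 :=
    hnz _ ⟨![0, 0, 1, 0, 1, 0, 0], by simp⟩
  simp only [Fin.sum_univ_four, Matrix.cons_val_zero, Matrix.cons_val_one, Matrix.head_cons,
    Matrix.cons_val_two, Matrix.tail_cons, Matrix.cons_val_three] at hg
  have hsm : ∀ (c : ℂ) (x : K), c • x = f (C c) * x := fun c x => by
    rw [← algebraMap_smul K c x, smul_eq_mul, ← hC]
  simp only [hsm, hX] at hg
  have M0 : f (MvPolynomial.X 0) * f (MvPolynomial.X 1) *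
      f (MvPolynomial.X 3 * MvPolynomial.X 4 * MvPolynomial.X 2
      - MvPolynomial.X 0 * MvPolynomial.X 4 * MvPolynomial.X 5
      - MvPolynomial.X 3 * MvPolynomial.X 1 * MvPolynomial.X 6) ≠ 0 :=
    mul_ne_zero (mul_ne_zero h0 h1) hd0
  have hD0 : f (MvPolynomial.X 0 * MvPolynomial.X 1 *
      (MvPolynomial.X 3 * MvPolynomial.X 4 * MvPolynomial.X 2 -
        MvPolynomial.X 0 * MvPolynomial.X 4 * MvPolynomial.X 5 -
        MvPolynomial.X 3 * MvPolynomial.X 1 * MvPolynomial.X 6) : MvPolynomial (Fin 7) ℂ) ≠ 0 :=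
    hnz _ ⟨![1, 1, 1, 1, 1, 0, 0], by norm_num [show (![1, 1, 1, 1, 1, 0, 0] : Fin 7 → ℂ) 2 = 1 from rfl, show (![1, 1, 1, 1, 1, 0, 0] : Fin 7 → ℂ) 3 = 1 from rfl, show (![1, 1, 1, 1, 1, 0, 0] : Fin 7 → ℂ) 4 = 1 from rfl, show (![1, 1, 1, 1, 1, 0, 0] : Fin 7 → ℂ) 5 = 0 from rfl, show (![1, 1, 1, 1, 1, 0, 0] : Fin 7 → ℂ) 6 = 0 from rfl]⟩
  have hD1 : f (MvPolynomial.X 0 * MvPolynomial.X 1 *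
      (MvPolynomial.X 3 * MvPolynomial.X 2 - MvPolynomial.X 0 * MvPolynomial.X 5) :
      MvPolynomial (Fin 7) ℂ) ≠ 0 :=
    hnz _ ⟨![1, 1, 1, 1, 0, 0, 0], by norm_num [show (![1, 1, 1, 1, 0, 0, 0] : Fin 7 → ℂ) 2 = 1 from rfl, show (![1, 1, 1, 1, 0, 0, 0] : Fin 7 → ℂ) 3 = 1 from rfl, show (![1, 1, 1, 1, 0, 0, 0] : Fin 7 → ℂ) 5 = 0 from rfl]⟩
  have hD2 : f (MvPolynomial.X 0 * MvPolynomial.X 1 *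
      (MvPolynomial.X 4 * MvPolynomial.X 2 - MvPolynomial.X 1 * MvPolynomial.X 6) :
      MvPolynomial (Fin 7) ℂ) ≠ 0 :=
    hnz _ ⟨![1, 1, 1, 0, 1, 0, 0], by norm_num [show (![1, 1, 1, 0, 1, 0, 0] : Fin 7 → ℂ) 2 = 1 from rfl, show (![1, 1, 1, 0, 1, 0, 0] : Fin 7 → ℂ) 4 = 1 from rfl, show (![1, 1, 1, 0, 1, 0, 0] : Fin 7 → ℂ) 6 = 0 from rfl]⟩
  have hd0' : f (MvPolynomial.X 3) * f (MvPolynomial.X 4) * f (MvPolynomial.X 2)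
      - f (MvPolynomial.X 0) * f (MvPolynomial.X 4) * f (MvPolynomial.X 5)
      - f (MvPolynomial.X 3) * f (MvPolynomial.X 1) * f (MvPolynomial.X 6) ≠ 0 := by
    simpa only [map_mul, map_sub] using hd0
  have hd1' : f (MvPolynomial.X 3) * f (MvPolynomial.X 2)
      - f (MvPolynomial.X 0) * f (MvPolynomial.X 5) ≠ 0 := by
    simpa only [map_mul, map_sub] using hd1
  have hd2' : f (MvPolynomial.X 4) * f (MvPolynomial.X 2)
      - f (MvPolynomial.X 1) * f (MvPolynomial.X 6) ≠ 0 := by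
    simpa only [map_mul, map_sub] using hd2
  have hp : (C (g 0) * MvPolynomial.X 3 * MvPolynomial.X 4 * (MvPolynomial.X 3 * MvPolynomial.X 2 - MvPolynomial.X 0 * MvPolynomial.X 5) * (MvPolynomial.X 4 * MvPolynomial.X 2 - MvPolynomial.X 1 * MvPolynomial.X 6) * MvPolynomial.X 2
      + C (g 1) * MvPolynomial.X 3 * (MvPolynomial.X 3 * MvPolynomial.X 4 * MvPolynomial.X 2 - MvPolynomial.X 0 * MvPolynomial.X 4 * MvPolynomial.X 5 - MvPolynomial.X 3 * MvPolynomial.X 1 * MvPolynomial.X 6) * (MvPolynomial.X 4 * MvPolynomial.X 2 - MvPolynomial.X 1 * MvPolynomial.X 6) * MvPolynomial.X 2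
      + C (g 2) * MvPolynomial.X 4 * (MvPolynomial.X 3 * MvPolynomial.X 4 * MvPolynomial.X 2 - MvPolynomial.X 0 * MvPolynomial.X 4 * MvPolynomial.X 5 - MvPolynomial.X 3 * MvPolynomial.X 1 * MvPolynomial.X 6) * (MvPolynomial.X 3 * MvPolynomial.X 2 - MvPolynomial.X 0 * MvPolynomial.X 5) * MvPolynomial.X 2
      + C (g 3) * (MvPolynomial.X 3 * MvPolynomial.X 4 * MvPolynomial.X 2 - MvPolynomial.X 0 * MvPolynomial.X 4 * MvPolynomial.X 5 - MvPolynomial.X 3 * MvPolynomial.X 1 * MvPolynomial.X 6) * (MvPolynomial.X 3 * MvPolynomial.X 2 - MvPolynomial.X 0 * MvPolynomial.X 5) * (MvPolynomial.X 4 * MvPolynomial.X 2 - MvPolynomial.X 1 * MvPolynomial.X 6) : MvPolynomial (Fin 7) ℂ) = 0 := hinj (by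
    rw [map_zero]; simp only [map_add, map_mul, map_sub]; rw [← mul_eq_zero_of_left hg (f (MvPolynomial.X 0) * f (MvPolynomial.X 1) * (f (MvPolynomial.X 3) * f (MvPolynomial.X 4) * f (MvPolynomial.X 2) - f (MvPolynomial.X 0) * f (MvPolynomial.X 4) * f (MvPolynomial.X 5) - f (MvPolynomial.X 3) * f (MvPolynomial.X 1) * f (MvPolynomial.X 6)) * (f (MvPolynomial.X 3) * f (MvPolynomial.X 2) - f (MvPolynomial.X 0) * f (MvPolynomial.X 5)) * (f (MvPolynomial.X 4) * f (MvPolynomial.X 2) - f (MvPolynomial.X 1) * f (MvPolynomial.X 6)) * f (MvPolynomial.X 2))]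
    generalize (f (MvPolynomial.X 3) * f (MvPolynomial.X 4) * f (MvPolynomial.X 2) - f (MvPolynomial.X 0) * f (MvPolynomial.X 4) * f (MvPolynomial.X 5) - f (MvPolynomial.X 3) * f (MvPolynomial.X 1) * f (MvPolynomial.X 6)) = a at hd0' ⊢
    generalize (f (MvPolynomial.X 3) * f (MvPolynomial.X 2) - f (MvPolynomial.X 0) * f (MvPolynomial.X 5)) = b at hd1' ⊢
    generalize (f (MvPolynomial.X 4) * f (MvPolynomial.X 2) - f (MvPolynomial.X 1) * f (MvPolynomial.X 6)) = c at hd2' ⊢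
    field_simp)
  clear hg
  intro i
  fin_cases i
  · have e := congrArg (eval (![1, 1, 2, 1, 1, 1, 1] : Fin 7 → ℂ)) hp
    simp only [map_add, map_mul, map_sub, eval_C, eval_X, map_zero,
      show (![1, 1, 2, 1, 1, 1, 1] : Fin 7 → ℂ) 0 = 1 from rfl, show (![1, 1, 2, 1, 1, 1, 1] : Fin 7 → ℂ) 1 = 1 from rfl, show (![1, 1, 2, 1, 1, 1, 1] : Fin 7 → ℂ) 2 = 2 from rfl, show (![1, 1, 2, 1, 1, 1, 1] : Fin 7 → ℂ) 3 = 1 from rfl, show (![1, 1, 2, 1, 1, 1, 1] : Fin 7 → ℂ) 4 = 1 from rfl, show (![1, 1, 2, 1, 1, 1, 1] : Fin 7 → ℂ) 5 = 1 from rfl, show (![1, 1, 2, 1, 1, 1, 1] : Fin 7 → ℂ) 6 = 1 from rfl] at e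
    norm_num at e
    exact e
  · have e := congrArg (eval (![1, 1, 1, 1, 2, 1, 1] : Fin 7 → ℂ)) hp
    simp only [map_add, map_mul, map_sub, eval_C, eval_X, map_zero,
      show (![1, 1, 1, 1, 2, 1, 1] : Fin 7 → ℂ) 0 = 1 from rfl, show (![1, 1, 1, 1, 2, 1, 1] : Fin 7 → ℂ) 1 = 1 from rfl, show (![1, 1, 1, 1, 2, 1, 1] : Fin 7 → ℂ) 2 = 1 from rfl, show (![1, 1, 1, 1, 2, 1, 1] : Fin 7 → ℂ) 3 = 1 from rfl, show (![1, 1, 1, 1, 2, 1, 1] : Fin 7 → ℂ) 4 = 2 from rfl, show (![1, 1, 1, 1, 2, 1, 1] : Fin 7 → ℂ) 5 = 1 from rfl, show (![1, 1, 1, 1, 2, 1, 1] : Fin 7 → ℂ) 6 = 1 from rfl] at e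
    norm_num at e
    exact e
  · have e := congrArg (eval (![1, 1, 1, 2, 1, 3, 1] : Fin 7 → ℂ)) hp
    simp only [map_add, map_mul, map_sub, eval_C, eval_X, map_zero,
      show (![1, 1, 1, 2, 1, 3, 1] : Fin 7 → ℂ) 0 = 1 from rfl, show (![1, 1, 1, 2, 1, 3, 1] : Fin 7 → ℂ) 1 = 1 from rfl, show (![1, 1, 1, 2, 1, 3, 1] : Fin 7 → ℂ) 2 = 1 from rfl, show (![1, 1, 1, 2, 1, 3, 1] : Fin 7 → ℂ) 3 = 2 from rfl, show (![1, 1, 1, 2, 1, 3, 1] : Fin 7 → ℂ) 4 = 1 from rfl, show (![1, 1, 1, 2, 1, 3, 1] : Fin 7 → ℂ) 5 = 3 from rfl, show (![1, 1, 1, 2, 1, 3, 1] : Fin 7 → ℂ) 6 = 1 from rfl] at e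
    norm_num at e
    exact e
  · have e := congrArg (eval (![1, 1, 0, 1, 1, 1, 1] : Fin 7 → ℂ)) hp
    simp only [map_add, map_mul, map_sub, eval_C, eval_X, map_zero,
      show (![1, 1, 0, 1, 1, 1, 1] : Fin 7 → ℂ) 0 = 1 from rfl, show (![1, 1, 0, 1, 1, 1, 1] : Fin 7 → ℂ) 1 = 1 from rfl, show (![1, 1, 0, 1, 1, 1, 1] : Fin 7 → ℂ) 2 = 0 from rfl, show (![1, 1, 0, 1, 1, 1, 1] : Fin 7 → ℂ) 3 = 1 from rfl, show (![1, 1, 0, 1, 1, 1, 1] : Fin 7 → ℂ) 4 = 1 from rfl, show (![1, 1, 0, 1, 1, 1, 1] : Fin 7 → ℂ) 5 = 1 from rfl, show (![1, 1, 0, 1, 1, 1, 1] : Fin 7 → ℂ) 6 = 1 from rfl] at e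
    norm_num at e
    exact e
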